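/- Let n ≥ 1 and let ψ : ℂ^n × ℂ^n → ℂ be holomorphic (jointly complex analytic) on a product neighborhood W × W of (0,0) in ℂ^n × ℂ^n, such that ψ(x, conj(x)) is real for every x ∈ W, and such that the Hermitian matrix H with entries H_{ij} = (∂_{x_i} ∂_{z_j} ψ)(0, 0) is positive definite. Define φ(x) = ψ(x, conj(x)) and the diastasis D(x, y) = φ(x) + φ(y) − 2 Re ψ(x, conj(y)). Then there exist a real δ > 0 and a radius r > 0 such that for all x, y in the ball B(0, r) ⊂ ℂ^n: δ ‖x − y‖² ≤ D(x, y) ≤ δ^{−1} ‖x − y‖². In particular, 2 Re ψ(x, conj(y)) ≤ φ(x) + φ(y) − δ ‖x − y‖² for all x, y ∈ B(0, r). -/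

import Mathlib

set_option maxHeartbeats 2000000
set_option synthInstance.maxHeartbeats 400000

open scoped ComplexOrder Matrix

/-- Coordinatewise complex conjugation on `ℂ^n`. -/
noncomputable def conjVec {n : ℕ} (x : Fin n → ℂ) : Fin n → ℂ :=
  fun i => starRingEnd ℂ (x i)

/-- The local Kähler potential `φ(x) = ψ(x, conj x)` (real part). -/
noncomputable def potential {n : ℕ} (ψ : (Fin n → ℂ) → (Fin n → ℂ) → ℂ)
    (x : Fin n → ℂ) : ℝ :=
  (ψ x (conjVec x)).re

/-- Calabi's diastasis `D(x,y) = φ(x) + φ(y) - 2 Re ψ(x, conj y)`. -/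
noncomputable def diastasis {n : ℕ} (ψ : (Fin n → ℂ) → (Fin n → ℂ) → ℂ)
    (x y : Fin n → ℂ) : ℝ :=
  potential ψ x + potential ψ y - 2 * (ψ x (conjVec y)).re

namespace CalabiAux

variable {n : ℕ}

lemma conjVec_sub (x y : Fin n → ℂ) : conjVec (x - y) = conjVec x - conjVec y := by
  funext i; simp [conjVec]

lemma conjVec_real_smul (t : ℝ) (u : Fin n → ℂ) : conjVec (t • u) = t • conjVec u := by
  funext i
  simp [conjVec, Complex.real_smul]

lemma conjVec_add (x y : Fin n → ℂ) : conjVec (x + y) = conjVec x + conjVec y := by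
  funext i; simp [conjVec]

lemma conjVec_smul (c : ℂ) (x : Fin n → ℂ) :
    conjVec (c • x) = (starRingEnd ℂ c) • conjVec x := by
  funext i; simp [conjVec]

lemma conjVec_conjVec (x : Fin n → ℂ) : conjVec (conjVec x) = x := by
  funext i; simp [conjVec]

lemma conjVec_zero : conjVec (0 : Fin n → ℂ) = 0 := by
  funext i; simp [conjVec]

lemma conjVec_eq_zero {x : Fin n → ℂ} (h : conjVec x = 0) : x = 0 := by
  rw [← conjVec_conjVec x, h, conjVec_zero]

lemma norm_conjVec (x : Fin n → ℂ) : ‖conjVec x‖ = ‖x‖ := by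
  simp [conjVec, Pi.norm_def, Pi.nnnorm_def]

/-- The antiholomorphic reflection `σ(x,z) = (conj z, conj x)`. -/
noncomputable def sigma (p : (Fin n → ℂ) × (Fin n → ℂ)) : (Fin n → ℂ) × (Fin n → ℂ) :=
  (conjVec p.2, conjVec p.1)

lemma sigma_add (p q : (Fin n → ℂ) × (Fin n → ℂ)) : sigma (p + q) = sigma p + sigma q := by
  simp [sigma, conjVec_add, Prod.ext_iff]

lemma sigma_smul (c : ℂ) (p : (Fin n → ℂ) × (Fin n → ℂ)) :
    sigma (c • p) = (starRingEnd ℂ c) • sigma p := by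
  simp [sigma, conjVec_smul, Prod.ext_iff]

lemma norm_sigma (p : (Fin n → ℂ) × (Fin n → ℂ)) : ‖sigma p‖ = ‖p‖ := by
  simp [sigma, Prod.norm_def, norm_conjVec, max_comm]

lemma nnnorm_sigma (p : (Fin n → ℂ) × (Fin n → ℂ)) : ‖sigma p‖₊ = ‖p‖₊ := by
  ext; exact norm_sigma p

/-- Conjugated continuous multilinear map. -/
noncomputable def conjCMM {k : ℕ}
    (m : ContinuousMultilinearMap ℂ (fun _ : Fin k => (Fin n → ℂ) × (Fin n → ℂ)) ℂ) :
    ContinuousMultilinearMap ℂ (fun _ : Fin k => (Fin n → ℂ) × (Fin n → ℂ)) ℂ :=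
  MultilinearMap.mkContinuous
    { toFun := fun v => starRingEnd ℂ (m fun i => sigma (v i))
      map_update_add' := by
        intro _ v i x y
        have key : ∀ (x : (Fin n → ℂ) × (Fin n → ℂ)),
            (fun j => sigma (Function.update v i x j))
              = Function.update (fun j => sigma (v j)) i (sigma x) := by
          intro x
          funext j
          exact Function.apply_update (fun _ w => sigma w) v i x j
        simp [key, sigma_add]
      map_update_smul' := by
        intro _ v i c x
        have key : ∀ (x : (Fin n → ℂ) × (Fin n → ℂ)),
            (fun j => sigma (Function.update v i x j))
              = Function.update (fun j => sigma (v j)) i (sigma x) := by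
          intro x
          funext j
          exact Function.apply_update (fun _ w => sigma w) v i x j
        simp [key, sigma_smul, smul_eq_mul] }
    ‖m‖
    (by
      intro v
      calc ‖starRingEnd ℂ (m fun i => sigma (v i))‖ = ‖m fun i => sigma (v i)‖ := by
            simp
        _ ≤ ‖m‖ * ∏ i, ‖sigma (v i)‖ := m.le_opNorm _
        _ = ‖m‖ * ∏ i, ‖v i‖ := by simp [norm_sigma])

lemma norm_conjCMM_le {k : ℕ}
    (m : ContinuousMultilinearMap ℂ (fun _ : Fin k => (Fin n → ℂ) × (Fin n → ℂ)) ℂ) :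
    ‖conjCMM m‖ ≤ ‖m‖ :=
  MultilinearMap.mkContinuous_norm_le _ (norm_nonneg m) _

lemma conjCMM_apply {k : ℕ}
    (m : ContinuousMultilinearMap ℂ (fun _ : Fin k => (Fin n → ℂ) × (Fin n → ℂ)) ℂ)
    (v : Fin k → (Fin n → ℂ) × (Fin n → ℂ)) :
    conjCMM m v = starRingEnd ℂ (m fun i => sigma (v i)) := rfl

/-- Conjugate of an analytic function precomposed with `σ` is analytic. -/
lemma analyticAt_conj_comp {f : (Fin n → ℂ) × (Fin n → ℂ) → ℂ}
    {q : (Fin n → ℂ) × (Fin n → ℂ)} (hf : AnalyticAt ℂ f (sigma q)) :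
    AnalyticAt ℂ (fun p => starRingEnd ℂ (f (sigma p))) q := by
  obtain ⟨pser, r, hp⟩ := hf
  refine ⟨fun k => conjCMM (pser k), r, ?_, hp.r_pos, ?_⟩
  · refine hp.r_le.trans (ENNReal.le_of_forall_nnreal_lt fun ρ hρ => ?_)
    obtain ⟨C, hC0, hC⟩ := pser.norm_mul_pow_le_of_lt_radius hρ
    refine FormalMultilinearSeries.le_radius_of_bound _ C fun k => ?_
    exact le_trans (mul_le_mul_of_nonneg_right (norm_conjCMM_le _)
      (pow_nonneg ρ.2 k)) (hC k)
  · intro y hy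
    have hy' : sigma y ∈ Metric.eball (0 : (Fin n → ℂ) × (Fin n → ℂ)) r := by
      simpa [Metric.mem_eball, edist_zero_right, enorm_eq_nnnorm, nnnorm_sigma] using hy
    have h1 := hp.hasSum hy'
    have h2 := h1.map (starRingEnd ℂ).toAddMonoidHom Complex.continuous_conj
    have heq : sigma q + sigma y = sigma (q + y) := (sigma_add q y).symm
    rw [heq] at h2
    exact h2


/-- conj as an ℝ-CLM on `ℂ^n`. -/
noncomputable def conjCLM : (Fin n → ℂ) →L[ℝ] (Fin n → ℂ) :=
  ContinuousLinearMap.pi fun i =>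
    (Complex.conjCLE : ℂ →L[ℝ] ℂ).comp (ContinuousLinearMap.proj i)

lemma conjCLM_apply (x : Fin n → ℂ) : conjCLM x = conjVec x := by
  funext i; simp [conjCLM, conjVec]

/-- `x ↦ (x, conj x)` as an ℝ-CLM. -/
noncomputable def cR : (Fin n → ℂ) →L[ℝ] ((Fin n → ℂ) × (Fin n → ℂ)) :=
  (ContinuousLinearMap.id ℝ _).prod conjCLM

lemma cR_apply (x : Fin n → ℂ) : cR x = (x, conjVec x) := by
  simp [cR, conjCLM_apply]

lemma continuous_conjVec : Continuous (conjVec (n := n)) := by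
  have : (conjVec (n := n)) = fun x => conjCLM x := by
    funext x; rw [conjCLM_apply]
  rw [this]; exact conjCLM.continuous

/-- The reflection identity. -/
lemma reflection {W : Set (Fin n → ℂ)} (hW : IsOpen W) (h0W : (0 : Fin n → ℂ) ∈ W)
    {ψ : (Fin n → ℂ) → (Fin n → ℂ) → ℂ}
    (hψ : AnalyticOnNhd ℂ (fun p : (Fin n → ℂ) × (Fin n → ℂ) => ψ p.1 p.2) (W ×ˢ W))
    (hreal : ∀ x ∈ W, (ψ x (conjVec x)).im = 0) :
    ∃ ρ : ℝ, 0 < ρ ∧ ∀ p : (Fin n → ℂ) × (Fin n → ℂ), ‖p‖ < ρ →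
      ψ p.1 p.2 = starRingEnd ℂ (ψ (conjVec p.2) (conjVec p.1)) := by
  classical
  set f : (Fin n → ℂ) × (Fin n → ℂ) → ℂ := fun p => ψ p.1 p.2 with hf_def
  set V : Set (Fin n → ℂ) := W ∩ conjVec ⁻¹' W with hV_def
  have hV : IsOpen V := hW.inter (hW.preimage continuous_conjVec)
  have h0V : (0 : Fin n → ℂ) ∈ V := ⟨h0W, by simp [Set.mem_preimage, conjVec_zero, h0W]⟩
  have hsub : V ×ˢ V ⊆ W ×ˢ W := Set.prod_mono Set.inter_subset_left Set.inter_subset_left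
  have hsigma_mem : ∀ q ∈ V ×ˢ V, sigma q ∈ W ×ˢ W := by
    rintro ⟨a, b⟩ ⟨⟨haW, ha'⟩, ⟨hbW, hb'⟩⟩
    exact ⟨hb', ha'⟩
  set g : (Fin n → ℂ) × (Fin n → ℂ) → ℂ := fun p => starRingEnd ℂ (f (sigma p)) with hg_def
  set h : (Fin n → ℂ) × (Fin n → ℂ) → ℂ := fun p => f p - g p with hh_def
  have hh : AnalyticOnNhd ℂ h (V ×ˢ V) := by
    intro q hq
    exact ((hψ q (hsub hq)).sub (analyticAt_conj_comp (hψ _ (hsigma_mem q hq))))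
  have hdiag : ∀ x ∈ V, h (x, conjVec x) = 0 := by
    intro x hx
    have hsig : sigma (x, conjVec x) = (x, conjVec x) := by
      simp [sigma, conjVec_conjVec]
    have hre : (ψ x (conjVec x)).im = 0 := hreal x hx.1
    simp only [hh_def, hg_def, hsig, hf_def]
    rw [Complex.conj_eq_iff_im.2 hre]
    ring
  -- all iterated derivatives of h vanish on the diagonal
  have key : ∀ k : ℕ, ∀ x ∈ V, iteratedFDeriv ℂ k h (x, conjVec x) = 0 := by
    intro k
    induction k with
    | zero =>
      intro x hx
      ext v
      simp [iteratedFDeriv_zero_apply, hdiag x hx]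
    | succ k ih =>
      intro x hx
      have hxx : (x, conjVec x) ∈ V ×ˢ V := ⟨hx, by
        refine ⟨hx.2, ?_⟩
        simp only [Set.mem_preimage, conjVec_conjVec]
        exact hx.1⟩
      have hFk : AnalyticOnNhd ℂ (iteratedFDeriv ℂ k h) (V ×ˢ V) :=
        hh.iteratedFDeriv k
      have hdFk : HasFDerivAt (iteratedFDeriv ℂ k h)
          (fderiv ℂ (iteratedFDeriv ℂ k h) (x, conjVec x)) (x, conjVec x) :=
        (hFk _ hxx).differentiableAt.hasFDerivAt
      set Dk := fderiv ℂ (iteratedFDeriv ℂ k h) (x, conjVec x) with hDk_def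
      have hcomp : HasFDerivAt (fun u => iteratedFDeriv ℂ k h (u, conjVec u))
          ((Dk.restrictScalars ℝ).comp cR) x := by
        have h1 : HasFDerivAt (iteratedFDeriv ℂ k h) (Dk.restrictScalars ℝ) (cR x) := by
          rw [cR_apply]; exact hdFk.restrictScalars ℝ
        have := h1.comp x cR.hasFDerivAt
        have heq : (fun u => iteratedFDeriv ℂ k h (cR u))
            = fun u => iteratedFDeriv ℂ k h (u, conjVec u) := by
          funext u; rw [cR_apply]
        rwa [show ((iteratedFDeriv ℂ k h) ∘ cR) = fun u => iteratedFDeriv ℂ k h (cR u) from rfl,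
          heq] at this
      have hzero : (Dk.restrictScalars ℝ).comp cR = 0 := by
        have h0 : (fun u => iteratedFDeriv ℂ k h (u, conjVec u)) =ᶠ[nhds x]
            (fun _ => (0 : ContinuousMultilinearMap ℂ
              (fun _ : Fin k => (Fin n → ℂ) × (Fin n → ℂ)) ℂ)) := by
          filter_upwards [hV.mem_nhds hx] with u hu
          exact ih u hu
        have := h0.fderiv_eq (𝕜 := ℝ)
        rw [hcomp.fderiv] at this
        simpa using this
      have hker : ∀ u : Fin n → ℂ, Dk (u, conjVec u) = 0 := by
        intro u
        have := congrFun (congrArg (fun (L : (Fin n → ℂ) →L[ℝ] _) => (L : (Fin n → ℂ) → _)) hzero) u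
        simpa [cR_apply] using this
      have h1 : ∀ a : Fin n → ℂ, Dk (0, conjVec a) = 0 := by
        intro a
        have hA := hker a
        have hB := hker (Complex.I • a)
        have hc : conjVec (Complex.I • a) = (-Complex.I) • conjVec a := by
          rw [conjVec_smul]; simp
        rw [hc] at hB
        have hsplit : ((Complex.I • a, (-Complex.I) • conjVec a) :
            (Fin n → ℂ) × (Fin n → ℂ))
            = Complex.I • ((a, conjVec a) : (Fin n → ℂ) × (Fin n → ℂ))
              + ((-2*Complex.I) • ((0, conjVec a) : (Fin n → ℂ) × (Fin n → ℂ))) := by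
          refine Prod.ext ?_ ?_ <;> simp [Prod.smul_fst, Prod.smul_snd] <;> module
        rw [hsplit, map_add, map_smul, hA, smul_zero, zero_add, map_smul] at hB
        rcases smul_eq_zero.1 hB with hB | hB
        · exact absurd hB (by simp [Complex.I_ne_zero])
        · exact hB
      have h2 : ∀ a : Fin n → ℂ, Dk (a, 0) = 0 := by
        intro a
        have hA := hker a
        have hsplit : ((a, conjVec a) : (Fin n → ℂ) × (Fin n → ℂ))
            = (a, 0) + (0, conjVec a) := by simp
        rw [hsplit, map_add, h1 a, add_zero] at hA
        exact hA
      have hDk : Dk = 0 := by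
        refine ContinuousLinearMap.ext fun p => ?_
        obtain ⟨a, b⟩ := p
        have hsplit : ((a, b) : (Fin n → ℂ) × (Fin n → ℂ)) = (a, 0) + (0, b) := by simp
        rw [hsplit, map_add, h2 a]
        have := h1 (conjVec b)
        rw [conjVec_conjVec] at this
        rw [this, add_zero]
        simp
      rw [iteratedFDeriv_succ_eq_comp_left, Function.comp_apply, ← hDk_def, hDk]
      exact LinearIsometryEquiv.map_zero _
  -- conclude by power series at 0
  have h00 : ((0 : Fin n → ℂ), (0 : Fin n → ℂ)) ∈ V ×ˢ V := ⟨h0V, h0V⟩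
  obtain ⟨pser, hps⟩ := hh _ h00
  obtain ⟨rr, hball⟩ := hps
  obtain ⟨ρ, hρ1, hρ2⟩ := ENNReal.lt_iff_exists_nnreal_btwn.1 hball.r_pos
  refine ⟨ρ, by exact_mod_cast hρ1, ?_⟩
  intro p hp
  have hmem : p ∈ Metric.eball (0 : (Fin n → ℂ) × (Fin n → ℂ)) rr := by
    rw [Metric.mem_eball, edist_zero_right, enorm_eq_nnnorm]
    refine lt_trans ?_ hρ2
    exact_mod_cast hp
  have hs := hball.hasSum_iteratedFDeriv hmem
  have hzero : ∀ k : ℕ, iteratedFDeriv ℂ k h ((0 : Fin n → ℂ), (0 : Fin n → ℂ)) = 0 := by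
    intro k
    have := key k 0 h0V
    rwa [conjVec_zero] at this
  have hs0 : HasSum (fun _ : ℕ => (0 : ℂ))
      (h (((0 : Fin n → ℂ), (0 : Fin n → ℂ)) + p)) := by
    simpa [hzero] using hs
  have hhp : h p = 0 := by
    have := hs0.unique hasSum_zero
    rwa [show ((0 : Fin n → ℂ), (0 : Fin n → ℂ)) + p = p by simp] at this
  have hfg : f p = g p := sub_eq_zero.1 hhp
  exact hfg


/-- Euclidean square norm. -/
noncomputable def Q (u : Fin n → ℂ) : ℝ := ∑ i, ‖u i‖ ^ 2

lemma Q_nonneg (u : Fin n → ℂ) : 0 ≤ Q u :=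
  Finset.sum_nonneg fun i _ => sq_nonneg _

lemma Q_zero : Q (0 : Fin n → ℂ) = 0 := by simp [Q]

lemma Q_smul (t : ℝ) (u : Fin n → ℂ) : Q (t • u) = t ^ 2 * Q u := by
  simp only [Q, Finset.mul_sum]
  refine Finset.sum_congr rfl fun i _ => ?_
  have : (t • u) i = (t : ℂ) * u i := by
    simp [Pi.smul_apply, Complex.real_smul]
  rw [this, norm_mul, mul_pow]
  simp [sq_abs]

lemma normsq_le_Q (u : Fin n → ℂ) : ‖u‖ ^ 2 ≤ Q u := by
  have h1 : ‖u‖ ≤ Real.sqrt (Q u) := by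
    refine (pi_norm_le_iff_of_nonneg (Real.sqrt_nonneg _)).2 fun i => ?_
    rw [show ‖u i‖ = Real.sqrt (‖u i‖ ^ 2) by rw [Real.sqrt_sq (norm_nonneg _)]]
    exact Real.sqrt_le_sqrt (Finset.single_le_sum (fun j _ => sq_nonneg (‖u j‖))
      (Finset.mem_univ i))
  calc ‖u‖ ^ 2 ≤ Real.sqrt (Q u) ^ 2 := by
        exact pow_le_pow_left₀ (norm_nonneg _) h1 2
    _ = Q u := Real.sq_sqrt (Q_nonneg u)

lemma Q_le_normsq (u : Fin n → ℂ) : Q u ≤ n * ‖u‖ ^ 2 := by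
  calc Q u ≤ ∑ _i : Fin n, ‖u‖ ^ 2 :=
        Finset.sum_le_sum fun i _ => pow_le_pow_left₀ (norm_nonneg _) (norm_le_pi_norm u i) 2
    _ = n * ‖u‖ ^ 2 := by simp [Finset.sum_const, mul_comm]

lemma Q_continuous : Continuous (Q (n := n)) := by
  unfold Q
  exact continuous_finset_sum _ fun i _ =>
    ((continuous_apply i).norm).pow 2

/-- Two-sided comparison of a continuous positive 2-homogeneous function with `Q`. -/
lemma posdef_bounds (hn : 1 ≤ n) (R : (Fin n → ℂ) → ℝ) (hRcont : Continuous R)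
    (hRsc : ∀ (t : ℝ) (u : Fin n → ℂ), R (t • u) = t ^ 2 * R u)
    (hRpos : ∀ u : Fin n → ℂ, u ≠ 0 → 0 < R u) :
    ∃ c₁ c₂ : ℝ, 0 < c₁ ∧ 0 < c₂ ∧
      ∀ u : Fin n → ℂ, c₁ * Q u ≤ R u ∧ R u ≤ c₂ * Q u := by
  haveI : Nonempty (Fin n) := ⟨⟨0, hn⟩⟩
  have hSc : IsCompact (Metric.sphere (0 : Fin n → ℂ) 1) := isCompact_sphere _ _
  have hSne : (Metric.sphere (0 : Fin n → ℂ) 1).Nonempty :=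
    NormedSpace.sphere_nonempty.2 zero_le_one
  obtain ⟨u₀, hu₀S, hmin⟩ := hSc.exists_isMinOn hSne hRcont.continuousOn
  obtain ⟨u₁, hu₁S, hmax⟩ := hSc.exists_isMaxOn hSne hRcont.continuousOn
  have hu₀n : ‖u₀‖ = 1 := by simpa using hu₀S
  have hu₀ne : u₀ ≠ 0 := by
    intro h; rw [h] at hu₀n; simp at hu₀n
  have hm : 0 < R u₀ := hRpos u₀ hu₀ne
  set m := R u₀ with hm_def
  set c₂ := max (R u₁) 1 with hc₂_def
  have hc₂pos : (0:ℝ) < c₂ := lt_of_lt_of_le one_pos (le_max_right _ _)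
  refine ⟨m / n, c₂, div_pos hm (by exact_mod_cast hn), hc₂pos, fun u => ?_⟩
  rcases eq_or_ne u 0 with rfl | hu
  · simp [Q_zero]
    have : R 0 = 0 := by
      have := hRsc 0 0; simpa using this
    simp [this]
  · have htpos : (0:ℝ) < ‖u‖ := norm_pos_iff.2 hu
    set t := ‖u‖ with ht_def
    set w := t⁻¹ • u with hw_def
    have hwn : ‖w‖ = 1 := by
      rw [hw_def, norm_smul, norm_inv, Real.norm_eq_abs, abs_of_pos htpos]
      exact inv_mul_cancel₀ (ne_of_gt htpos)
    have hwS : w ∈ Metric.sphere (0 : Fin n → ℂ) 1 := by simpa using hwn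
    have huw : u = t • w := by
      rw [hw_def, smul_smul, mul_inv_cancel₀ (ne_of_gt htpos), one_smul]
    have hRu : R u = t ^ 2 * R w := by rw [huw, hRsc]
    have hQu : Q u = t ^ 2 * Q w := by rw [huw, Q_smul]
    have hQw1 : 1 ≤ Q w := by
      have := normsq_le_Q w; rwa [hwn, one_pow] at this
    have hQwn : Q w ≤ n := by
      have := Q_le_normsq w; rwa [hwn, one_pow, mul_one] at this
    have hRwm : m ≤ R w := hmin hwS
    have hRwM : R w ≤ c₂ := le_trans (hmax hwS) (le_max_left _ _)
    constructor
    · rw [hRu, hQu]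
      have h1 : m / n * (t ^ 2 * Q w) ≤ m / n * (t ^ 2 * n) := by
        refine mul_le_mul_of_nonneg_left ?_ (le_of_lt (div_pos hm (by exact_mod_cast hn)))
        exact mul_le_mul_of_nonneg_left hQwn (sq_nonneg t)
      have h2 : m / n * (t ^ 2 * n) = m * t ^ 2 := by
        field_simp
      have h3 : m * t ^ 2 ≤ t ^ 2 * R w :=
        by rw [mul_comm]; exact mul_le_mul_of_nonneg_left hRwm (sq_nonneg t)
      linarith
    · rw [hRu, hQu]
      have h1 : t ^ 2 * R w ≤ t ^ 2 * c₂ := mul_le_mul_of_nonneg_left hRwM (sq_nonneg t)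
      have h2 : t ^ 2 * c₂ ≤ c₂ * (t ^ 2 * Q w) := by
        have : t ^ 2 * c₂ * 1 ≤ t ^ 2 * c₂ * Q w := by
          refine mul_le_mul_of_nonneg_left hQw1 ?_
          positivity
        nlinarith [sq_nonneg t]
      linarith


lemma sum_smul_single (u : Fin n → ℂ) :
    ∑ i, u i • (Pi.single i 1 : Fin n → ℂ) = u := by
  funext j
  rw [Finset.sum_apply]
  simp [Pi.single_apply]

/-- Expansion of the mixed Hessian form in coordinates. -/
lemma Bform (B : ((Fin n → ℂ) × (Fin n → ℂ)) →L[ℂ] (((Fin n → ℂ) × (Fin n → ℂ)) →L[ℂ] ℂ))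
    (u v : Fin n → ℂ) :
    B (u, 0) (0, v) = ∑ i, ∑ j, u i * v j
      * B ((Pi.single i 1 : Fin n → ℂ), 0) (0, (Pi.single j 1 : Fin n → ℂ)) := by
  have hu : ((u, (0 : Fin n → ℂ)) : (Fin n → ℂ) × (Fin n → ℂ))
      = ∑ i, u i • (((Pi.single i 1 : Fin n → ℂ), (0 : Fin n → ℂ))) := by
    refine Prod.ext ?_ ?_
    · rw [Prod.fst_sum]
      exact (by simpa using (sum_smul_single u).symm)
    · rw [Prod.snd_sum]; simp
  have hv : (((0 : Fin n → ℂ), v) : (Fin n → ℂ) × (Fin n → ℂ))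
      = ∑ j, v j • ((((0 : Fin n → ℂ), (Pi.single j 1 : Fin n → ℂ)))) := by
    refine Prod.ext ?_ ?_
    · rw [Prod.fst_sum]; simp
    · rw [Prod.snd_sum]
      exact (by simpa using (sum_smul_single v).symm)
  rw [hu, map_sum, ContinuousLinearMap.sum_apply]
  refine Finset.sum_congr rfl fun i _ => ?_
  rw [map_smul, ContinuousLinearMap.smul_apply, hv, map_sum, Finset.smul_sum]
  refine Finset.sum_congr rfl fun j _ => ?_
  rw [map_smul]
  simp only [smul_eq_mul]
  ring

/-- The diagonal values of the Hessian form as a matrix quadratic form. -/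
lemma Bform_dot (B : ((Fin n → ℂ) × (Fin n → ℂ)) →L[ℂ] (((Fin n → ℂ) × (Fin n → ℂ)) →L[ℂ] ℂ))
    (u : Fin n → ℂ) :
    B (u, 0) (0, conjVec u)
      = star (conjVec u) ⬝ᵥ
          ((Matrix.of fun i j =>
            B ((Pi.single i 1 : Fin n → ℂ), 0) (0, (Pi.single j 1 : Fin n → ℂ))) *ᵥ conjVec u) := by
  rw [Bform]
  simp only [dotProduct, Matrix.mulVec, Matrix.of_apply, Pi.star_apply, Finset.mul_sum]
  refine Finset.sum_congr rfl fun i _ => Finset.sum_congr rfl fun j _ => ?_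
  have h1 : star (conjVec u i) = u i := by simp [conjVec]
  rw [h1]
  ring


lemma identH {W : Set (Fin n → ℂ)} (hW : IsOpen W) (h0W : (0 : Fin n → ℂ) ∈ W)
    {ψ : (Fin n → ℂ) → (Fin n → ℂ) → ℂ}
    (hψ : AnalyticOnNhd ℂ (fun p : (Fin n → ℂ) × (Fin n → ℂ) => ψ p.1 p.2) (W ×ˢ W))
    (i j : Fin n) :
    fderiv ℂ (fun x : Fin n → ℂ =>
        fderiv ℂ (fun z : Fin n → ℂ => ψ x z) 0 (Pi.single j 1)) 0 (Pi.single i 1)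
      = fderiv ℂ (fderiv ℂ (fun p : (Fin n → ℂ) × (Fin n → ℂ) => ψ p.1 p.2)) (0, 0)
          ((Pi.single i 1 : Fin n → ℂ), 0) (0, (Pi.single j 1 : Fin n → ℂ)) := by
  set f : (Fin n → ℂ) × (Fin n → ℂ) → ℂ := fun p => ψ p.1 p.2 with hf_def
  set f' := fderiv ℂ f with hf'_def
  have hWW : IsOpen (W ×ˢ W) := hW.prod hW
  -- Step A
  have hA : ∀ x ∈ W, fderiv ℂ (fun z : Fin n → ℂ => ψ x z) 0
      = (f' (x, 0)).comp (ContinuousLinearMap.inr ℂ (Fin n → ℂ) (Fin n → ℂ)) := by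
    intro x hx
    have hfd : HasFDerivAt f (f' (x, 0)) (x, 0) :=
      (hψ (x, 0) ⟨hx, h0W⟩).differentiableAt.hasFDerivAt
    have hinr : HasFDerivAt (fun z : Fin n → ℂ => ((x, z) : (Fin n → ℂ) × (Fin n → ℂ)))
        (ContinuousLinearMap.inr ℂ (Fin n → ℂ) (Fin n → ℂ)) 0 := by
      have hpr : HasFDerivAt (fun z : Fin n → ℂ => ((x, z) : (Fin n → ℂ) × (Fin n → ℂ)))
          ((0 : (Fin n → ℂ) →L[ℂ] (Fin n → ℂ)).prod (ContinuousLinearMap.id ℂ (Fin n → ℂ)))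
          0 := (hasFDerivAt_const x (0 : Fin n → ℂ)).prodMk (hasFDerivAt_id (0 : Fin n → ℂ))
      have heq : ((0 : (Fin n → ℂ) →L[ℂ] (Fin n → ℂ)).prod (ContinuousLinearMap.id ℂ (Fin n → ℂ)))
          = ContinuousLinearMap.inr ℂ (Fin n → ℂ) (Fin n → ℂ) := by
        ext v <;> simp
      rwa [heq] at hpr
    have hcomp := hfd.comp (0 : Fin n → ℂ) hinr
    exact hcomp.fderiv
  -- Step B
  have hB : (fun x : Fin n → ℂ => fderiv ℂ (fun z : Fin n → ℂ => ψ x z) 0 (Pi.single j 1))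
      =ᶠ[nhds (0 : Fin n → ℂ)]
      (fun x : Fin n → ℂ => f' (x, 0) ((0 : Fin n → ℂ), (Pi.single j 1 : Fin n → ℂ))) := by
    filter_upwards [hW.mem_nhds h0W] with x hx
    rw [hA x hx]
    simp
  -- Step C
  have hf'' : HasFDerivAt f' (fderiv ℂ f' (0, 0)) (0, 0) :=
    ((hψ.fderiv) (0, 0) ⟨h0W, h0W⟩).differentiableAt.hasFDerivAt
  have hinl : HasFDerivAt (fun x : Fin n → ℂ => ((x, 0) : (Fin n → ℂ) × (Fin n → ℂ)))
      (ContinuousLinearMap.inl ℂ (Fin n → ℂ) (Fin n → ℂ)) 0 := by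
    have hpr : HasFDerivAt (fun x : Fin n → ℂ => ((x, 0) : (Fin n → ℂ) × (Fin n → ℂ)))
        ((ContinuousLinearMap.id ℂ (Fin n → ℂ)).prod (0 : (Fin n → ℂ) →L[ℂ] (Fin n → ℂ)))
        0 := (hasFDerivAt_id (0 : Fin n → ℂ)).prodMk (hasFDerivAt_const (0 : Fin n → ℂ) _)
    have heq : ((ContinuousLinearMap.id ℂ (Fin n → ℂ)).prod (0 : (Fin n → ℂ) →L[ℂ] (Fin n → ℂ)))
        = ContinuousLinearMap.inl ℂ (Fin n → ℂ) (Fin n → ℂ) := by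
      ext v <;> simp
    rwa [heq] at hpr
  have h1 : HasFDerivAt (fun x : Fin n → ℂ => f' ((x, 0) : (Fin n → ℂ) × (Fin n → ℂ)))
      ((fderiv ℂ f' (0, 0)).comp (ContinuousLinearMap.inl ℂ (Fin n → ℂ) (Fin n → ℂ))) 0 := by
    refine HasFDerivAt.comp 0 ?_ hinl
    exact hf''
  set ev := ContinuousLinearMap.apply ℂ ℂ
    (((0 : Fin n → ℂ), (Pi.single j 1 : Fin n → ℂ)) : (Fin n → ℂ) × (Fin n → ℂ)) with hev_def
  have h2 : HasFDerivAt
      (fun x : Fin n → ℂ => f' ((x, 0) : (Fin n → ℂ) × (Fin n → ℂ))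
        ((0 : Fin n → ℂ), (Pi.single j 1 : Fin n → ℂ)))
      (ev.comp ((fderiv ℂ f' (0, 0)).comp (ContinuousLinearMap.inl ℂ (Fin n → ℂ) (Fin n → ℂ)))) 0 :=
    (ev.hasFDerivAt).comp 0 h1
  rw [hB.fderiv_eq, h2.fderiv]
  simp [hev_def]


end CalabiAux

open CalabiAux

/-- Two-sided comparison of Calabi's diastasis with the squared Euclidean distance
near the origin, together with the 'good contour' inequality
`2 Re ψ(x, conj y) ≤ φ(x) + φ(y) - δ ‖x - y‖²`. -/
theorem stmt_15 (n : ℕ) (hn : 1 ≤ n) (ψ : (Fin n → ℂ) → (Fin n → ℂ) → ℂ)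
    (W : Set (Fin n → ℂ)) (hW : IsOpen W) (h0W : (0 : Fin n → ℂ) ∈ W)
    (hψ : AnalyticOnNhd ℂ (fun p : (Fin n → ℂ) × (Fin n → ℂ) => ψ p.1 p.2) (W ×ˢ W))
    (hreal : ∀ x ∈ W, (ψ x (conjVec x)).im = 0)
    (hpos : (Matrix.of fun i j : Fin n =>
        fderiv ℂ (fun x : Fin n → ℂ =>
          fderiv ℂ (fun z : Fin n → ℂ => ψ x z) 0 (Pi.single j 1)) 0
          (Pi.single i 1)).PosDef) :
    ∃ δ : ℝ, 0 < δ ∧ ∃ r : ℝ, 0 < r ∧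
      ∀ x y : Fin n → ℂ,
        (∑ i, ‖x i‖ ^ 2) < r ^ 2 →
        (∑ i, ‖y i‖ ^ 2) < r ^ 2 →
          δ * ∑ i, ‖x i - y i‖ ^ 2 ≤ diastasis ψ x y ∧
          diastasis ψ x y ≤ δ⁻¹ * ∑ i, ‖x i - y i‖ ^ 2 ∧
          2 * (ψ x (conjVec y)).re ≤
            potential ψ x + potential ψ y - δ * ∑ i, ‖x i - y i‖ ^ 2 := by
  classical
  set f : (Fin n → ℂ) × (Fin n → ℂ) → ℂ := fun p => ψ p.1 p.2 with hf_def
  have hWW : IsOpen (W ×ˢ W) := hW.prod hW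
  have h00 : (((0 : Fin n → ℂ), (0 : Fin n → ℂ)) : (Fin n → ℂ) × (Fin n → ℂ)) ∈ W ×ˢ W :=
    ⟨h0W, h0W⟩
  have hf1 : AnalyticOnNhd ℂ (fderiv ℂ f) (W ×ˢ W) := hψ.fderiv
  have hf2 : AnalyticOnNhd ℂ (fderiv ℂ (fderiv ℂ f)) (W ×ˢ W) := hf1.fderiv
  set B := fderiv ℂ (fderiv ℂ f) ((0 : Fin n → ℂ), (0 : Fin n → ℂ)) with hB_def
  -- the quadratic form
  set R : (Fin n → ℂ) → ℝ := fun u => (B (u, 0) (0, conjVec u)).re with hR_def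
  have hRcont : Continuous R := by
    have h1 : Continuous fun u : Fin n → ℂ => B (u, 0) :=
      B.continuous.comp (continuous_id.prodMk continuous_const)
    have h2 : Continuous fun u : Fin n → ℂ =>
        (((0 : Fin n → ℂ), conjVec u) : (Fin n → ℂ) × (Fin n → ℂ)) :=
      continuous_const.prodMk continuous_conjVec
    exact Complex.continuous_re.comp (h1.clm_apply h2)
  have hRsc : ∀ (t : ℝ) (u : Fin n → ℂ), R (t • u) = t ^ 2 * R u := by
    intro t u
    have hpi : ∀ w : Fin n → ℂ, t • w = (t : ℂ) • w := by
      intro w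
      funext i
      simp [Pi.smul_apply, Complex.real_smul]
    have h1 : ((t • u, (0 : Fin n → ℂ)) : (Fin n → ℂ) × (Fin n → ℂ))
        = (t : ℂ) • ((u, 0) : (Fin n → ℂ) × (Fin n → ℂ)) := by
      refine Prod.ext ?_ ?_
      · simpa using hpi u
      · simp
    have h2 : (((0 : Fin n → ℂ), conjVec (t • u)) : (Fin n → ℂ) × (Fin n → ℂ))
        = (t : ℂ) • (((0 : Fin n → ℂ), conjVec u) : (Fin n → ℂ) × (Fin n → ℂ)) := by
      rw [conjVec_real_smul]
      refine Prod.ext ?_ ?_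
      · simp
      · simpa using hpi (conjVec u)
    simp only [hR_def]
    rw [h1, h2]
    have e1 : B ((t : ℂ) • ((u, 0) : (Fin n → ℂ) × (Fin n → ℂ)))
        = (t : ℂ) • B ((u, 0) : (Fin n → ℂ) × (Fin n → ℂ)) := map_smul _ _ _
    rw [e1, ContinuousLinearMap.smul_apply]
    have e2 : (B ((u, 0) : (Fin n → ℂ) × (Fin n → ℂ)))
        ((t : ℂ) • (((0 : Fin n → ℂ), conjVec u) : (Fin n → ℂ) × (Fin n → ℂ)))
        = (t : ℂ) • (B ((u, 0) : (Fin n → ℂ) × (Fin n → ℂ)))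
            (((0 : Fin n → ℂ), conjVec u) : (Fin n → ℂ) × (Fin n → ℂ)) := map_smul _ _ _
    rw [e2, smul_eq_mul, smul_eq_mul, ← mul_assoc]
    rw [show ((t:ℂ) * (t:ℂ)) = (((t^2 : ℝ) : ℂ)) by push_cast; ring]
    rw [Complex.re_ofReal_mul]
  have hRpos : ∀ u : Fin n → ℂ, u ≠ 0 → 0 < R u := by
    intro u hu
    have hMeq : (Matrix.of fun i j : Fin n =>
        fderiv ℂ (fun x : Fin n → ℂ =>
          fderiv ℂ (fun z : Fin n → ℂ => ψ x z) 0 (Pi.single j 1)) 0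
          (Pi.single i 1))
        = (Matrix.of fun i j : Fin n =>
            B ((Pi.single i 1 : Fin n → ℂ), 0) (0, (Pi.single j 1 : Fin n → ℂ))) := by
      ext i j
      simp only [Matrix.of_apply]
      exact identH hW h0W hψ i j
    have hpos2 : (Matrix.of fun i j : Fin n =>
        B ((Pi.single i 1 : Fin n → ℂ), 0) (0, (Pi.single j 1 : Fin n → ℂ))).PosDef := by
      rw [← hMeq]; exact hpos
    have hcu : conjVec u ≠ 0 := fun h => hu (conjVec_eq_zero h)
    have hlt := hpos2.dotProduct_mulVec_pos hcu
    have hre := (Complex.lt_def.1 hlt).1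
    simp only [Complex.zero_re] at hre
    simpa only [hR_def, Bform_dot] using hre
  obtain ⟨c₁, c₂, hc₁, hc₂, hcQ⟩ := posdef_bounds hn R hRcont hRsc hRpos
  set ε := c₁ / 2 with hε_def
  have hεpos : 0 < ε := by positivity
  -- continuity of the second derivative at the origin
  have hcontB : ContinuousAt (fderiv ℂ (fderiv ℂ f)) ((0 : Fin n → ℂ), (0 : Fin n → ℂ)) :=
    (hf2 _ h00).continuousAt
  obtain ⟨ρ₁, hρ₁pos, hρ₁⟩ := (Metric.continuousAt_iff (f := fderiv ℂ (fderiv ℂ f))).1 hcontB ε hεpos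
  obtain ⟨ρ₀, hρ₀pos, hρ₀sub⟩ := Metric.isOpen_iff.1 hWW _ h00
  set ρ₂ := min ρ₁ ρ₀ with hρ₂_def
  have hρ₂pos : 0 < ρ₂ := lt_min hρ₁pos hρ₀pos
  have hball_sub : Metric.ball (0 : (Fin n → ℂ) × (Fin n → ℂ)) ρ₂ ⊆ W ×ˢ W :=
    fun p hp => hρ₀sub (Metric.ball_subset_ball (min_le_right _ _) hp)
  have hballB : ∀ p ∈ Metric.ball (0 : (Fin n → ℂ) × (Fin n → ℂ)) ρ₂,
      ‖fderiv ℂ (fderiv ℂ f) p - B‖ ≤ ε := by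
    intro p hp
    have : dist p ((0 : Fin n → ℂ), (0 : Fin n → ℂ)) < ρ₁ :=
      lt_of_lt_of_le (Metric.mem_ball.1 hp) (min_le_left _ _)

    have := hρ₁ this
    have h2 : dist (fderiv ℂ (fderiv ℂ f) p) B = ‖fderiv ℂ (fderiv ℂ f) p - B‖ := dist_eq_norm (fderiv ℂ (fderiv ℂ f) p) B
    rw [← h2]
    exact le_of_lt this
  -- step 1 : uniform first-order comparison of `fderiv f` with `B`
  have hstep1 : ∀ w ∈ Metric.ball (0 : (Fin n → ℂ) × (Fin n → ℂ)) ρ₂,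
      ∀ w' ∈ Metric.ball (0 : (Fin n → ℂ) × (Fin n → ℂ)) ρ₂,
      ‖fderiv ℂ f w' - fderiv ℂ f w - B (w' - w)‖ ≤ ε * ‖w' - w‖ := by
    intro w hw w' hw'
    refine Convex.norm_image_sub_le_of_norm_hasFDerivWithin_le'
      (f' := fun p => fderiv ℂ (fderiv ℂ f) p) (fun p hp => ?_) (fun p hp => hballB p hp)
      (convex_ball _ _) hw hw'
    exact ((hf1 p (hball_sub hp)).differentiableAt.hasFDerivAt).hasFDerivWithinAt
  -- reflection
  obtain ⟨ρ, hρpos, hρrefl⟩ := reflection hW h0W hψ hreal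
  -- choose the radius
  set r := min (ρ₂ / 3) ρ with hr_def
  have hrpos : 0 < r := lt_min (by positivity) hρpos
  have hrρ₂ : r ≤ ρ₂ / 3 := min_le_left _ _
  have hrρ : r ≤ ρ := min_le_right _ _
  -- choose δ
  set δ := min (c₁ / 2) ((c₂ + c₁ / 2)⁻¹) with hδ_def
  have hc₂' : 0 < c₂ + c₁ / 2 := by positivity
  have hδpos : 0 < δ := lt_min (by positivity) (by positivity)
  have hδ1 : δ ≤ c₁ / 2 := min_le_left _ _
  have hδinv : c₂ + c₁ / 2 ≤ δ⁻¹ := by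
    have h1 : δ ≤ (c₂ + c₁ / 2)⁻¹ := min_le_right _ _
    calc c₂ + c₁ / 2 = ((c₂ + c₁ / 2)⁻¹)⁻¹ := by rw [inv_inv]
      _ ≤ δ⁻¹ := by
          exact inv_anti₀ hδpos h1
  refine ⟨δ, hδpos, r, hrpos, fun x y hx hy => ?_⟩
  -- sup norm bounds
  have hQx : Q x < r ^ 2 := by
    unfold Q
    calc (∑ i, ‖x i‖ ^ 2) = ∑ i, ‖x i‖ ^ 2 := by
          refine Finset.sum_congr rfl fun i _ => rfl
      _ < r ^ 2 := hx
  have hQy : Q y < r ^ 2 := by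
    unfold Q
    calc (∑ i, ‖y i‖ ^ 2) = ∑ i, ‖y i‖ ^ 2 := by
          refine Finset.sum_congr rfl fun i _ => rfl
      _ < r ^ 2 := hy
  have hxn : ‖x‖ < r := by nlinarith [normsq_le_Q x, norm_nonneg x]
  have hyn : ‖y‖ < r := by nlinarith [normsq_le_Q y, norm_nonneg y]
  set u := x - y with hu_def
  have hQu : Q u = ∑ i, ‖x i - y i‖ ^ 2 := by
    unfold Q
    refine Finset.sum_congr rfl fun i _ => ?_
    rw [show u i = x i - y i from rfl]
  have hQu0 : 0 ≤ Q u := Q_nonneg u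
  have hun : ‖u‖ < 2 * r := by
    calc ‖u‖ ≤ ‖x‖ + ‖y‖ := norm_sub_le x y
      _ < 2 * r := by linarith
  -- the four points
  set a : (Fin n → ℂ) × (Fin n → ℂ) := (y, conjVec y) with ha_def
  set b : (Fin n → ℂ) × (Fin n → ℂ) := (y, conjVec x) with hb_def
  set cvec : (Fin n → ℂ) × (Fin n → ℂ) := (u, 0) with hcvec_def
  have hnorm_pair : ∀ (p q : Fin n → ℂ), ‖((p, q) : (Fin n → ℂ) × (Fin n → ℂ))‖
      = max ‖p‖ ‖q‖ := fun p q => by rw [Prod.norm_def]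
  have ha_mem : a ∈ Metric.ball (0 : (Fin n → ℂ) × (Fin n → ℂ)) (ρ₂ / 3) := by
    rw [mem_ball_zero_iff, ha_def, hnorm_pair, norm_conjVec]
    simp only [max_self]
    linarith [lt_of_lt_of_le hyn hrρ₂]
  have hb_mem : b ∈ Metric.ball (0 : (Fin n → ℂ) × (Fin n → ℂ)) (ρ₂ / 3) := by
    rw [mem_ball_zero_iff, hb_def, hnorm_pair, norm_conjVec]
    exact max_lt (lt_of_lt_of_le hyn hrρ₂) (lt_of_lt_of_le hxn hrρ₂)
  have hcvec_norm : ‖cvec‖ = ‖u‖ := by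
    rw [hcvec_def, hnorm_pair]
    simp [norm_nonneg]
  -- step 2 : apply the mean value inequality to k
  set k : (Fin n → ℂ) × (Fin n → ℂ) → ℂ := fun w => f (w + cvec) - f w with hk_def
  have hsmall : Metric.ball (0 : (Fin n → ℂ) × (Fin n → ℂ)) (ρ₂ / 3)
      ⊆ Metric.ball (0 : (Fin n → ℂ) × (Fin n → ℂ)) ρ₂ :=
    Metric.ball_subset_ball (by linarith)
  have hshift : ∀ w ∈ Metric.ball (0 : (Fin n → ℂ) × (Fin n → ℂ)) (ρ₂ / 3),
      w + cvec ∈ Metric.ball (0 : (Fin n → ℂ) × (Fin n → ℂ)) ρ₂ := by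
    intro w hw
    rw [mem_ball_zero_iff] at hw ⊢
    calc ‖w + cvec‖ ≤ ‖w‖ + ‖cvec‖ := norm_add_le _ _
      _ < ρ₂ / 3 + 2 * r := by rw [hcvec_norm]; linarith
      _ ≤ ρ₂ / 3 + 2 * (ρ₂ / 3) := by linarith
      _ = ρ₂ := by ring
  have hkder : ∀ w ∈ Metric.ball (0 : (Fin n → ℂ) × (Fin n → ℂ)) (ρ₂ / 3),
      HasFDerivWithinAt k (fderiv ℂ f (w + cvec) - fderiv ℂ f w)
        (Metric.ball (0 : (Fin n → ℂ) × (Fin n → ℂ)) (ρ₂ / 3)) w := by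
    intro w hw
    have h1 : HasFDerivAt f (fderiv ℂ f (w + cvec)) (w + cvec) :=
      (hψ _ (hball_sub (hshift w hw))).differentiableAt.hasFDerivAt
    have htr : HasFDerivAt (fun w : (Fin n → ℂ) × (Fin n → ℂ) => w + cvec)
        (ContinuousLinearMap.id ℂ _) w := (hasFDerivAt_id w).add_const cvec
    have h1' := h1.comp w htr
    rw [ContinuousLinearMap.comp_id] at h1'
    have h2 : HasFDerivAt f (fderiv ℂ f w) w :=
      (hψ _ (hball_sub (hsmall hw))).differentiableAt.hasFDerivAt
    exact (h1'.sub h2).hasFDerivWithinAt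
  have hkbound : ∀ w ∈ Metric.ball (0 : (Fin n → ℂ) × (Fin n → ℂ)) (ρ₂ / 3),
      ‖(fderiv ℂ f (w + cvec) - fderiv ℂ f w) - B cvec‖ ≤ ε * ‖u‖ := by
    intro w hw
    have := hstep1 w (hsmall hw) (w + cvec) (hshift w hw)
    rw [add_sub_cancel_left] at this
    rwa [hcvec_norm] at this
  have hMVT := Convex.norm_image_sub_le_of_norm_hasFDerivWithin_le'
    (φ := B cvec) (C := ε * ‖u‖) hkder hkbound (convex_ball _ _) ha_mem hb_mem
  -- rewrite the MVT conclusion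
  have hba : b - a = ((0 : Fin n → ℂ), conjVec u) := by
    rw [hb_def, ha_def, Prod.mk_sub_mk, hu_def, conjVec_sub]
    simp
  have hba_norm : ‖b - a‖ = ‖u‖ := by
    rw [hba, hnorm_pair, norm_conjVec]
    simp [norm_nonneg]
  have hbc : b + cvec = ((x, conjVec x) : (Fin n → ℂ) × (Fin n → ℂ)) := by
    rw [hb_def, hcvec_def, Prod.mk_add_mk, hu_def]
    refine Prod.ext ?_ ?_ <;> simp
  have hac : a + cvec = ((x, conjVec y) : (Fin n → ℂ) × (Fin n → ℂ)) := by
    rw [ha_def, hcvec_def, Prod.mk_add_mk, hu_def]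
    refine Prod.ext ?_ ?_ <;> simp
  have hkb : k b = ψ x (conjVec x) - ψ y (conjVec x) := by
    rw [hk_def]; simp only [hbc]; rfl
  have hka : k a = ψ x (conjVec y) - ψ y (conjVec y) := by
    rw [hk_def]; simp only [hac]; rfl
  set LHSc : ℂ := ψ x (conjVec x) - ψ y (conjVec x) - ψ x (conjVec y) + ψ y (conjVec y)
    with hLHSc_def
  have hkdiff : k b - k a = LHSc := by
    rw [hkb, hka, hLHSc_def]; ring
  have hkey : ‖LHSc - B cvec ((0 : Fin n → ℂ), conjVec u)‖ ≤ ε * Q u := by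
    calc ‖LHSc - B cvec ((0 : Fin n → ℂ), conjVec u)‖
        = ‖k b - k a - (B cvec) (b - a)‖ := by rw [hkdiff, hba]
      _ ≤ ε * ‖u‖ * ‖b - a‖ := hMVT
      _ = ε * (‖u‖ * ‖u‖) := by rw [hba_norm]; ring
      _ ≤ ε * Q u := by
          have := normsq_le_Q u
          have h2 : ‖u‖ * ‖u‖ = ‖u‖ ^ 2 := by ring
          rw [h2]
          exact mul_le_mul_of_nonneg_left this (le_of_lt hεpos)
  -- reflection : the diastasis is the real part of LHSc
  have hrefl : ψ y (conjVec x) = starRingEnd ℂ (ψ x (conjVec y)) := by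
    have hmem : ‖((y, conjVec x) : (Fin n → ℂ) × (Fin n → ℂ))‖ < ρ := by
      rw [hnorm_pair, norm_conjVec]
      exact max_lt (lt_of_lt_of_le hyn hrρ) (lt_of_lt_of_le hxn hrρ)
    have := hρrefl (y, conjVec x) hmem
    simpa [conjVec_conjVec] using this
  have hD : diastasis ψ x y = LHSc.re := by
    rw [hLHSc_def, diastasis, potential, potential]
    simp only [Complex.add_re, Complex.sub_re]
    rw [hrefl, Complex.conj_re]
    ring
  -- the quadratic form value
  have hBval : (B cvec ((0 : Fin n → ℂ), conjVec u)).re = R u := by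
    rw [hR_def, hcvec_def]
  have habs : |diastasis ψ x y - R u| ≤ ε * Q u := by
    rw [hD, ← hBval]
    calc |LHSc.re - (B cvec ((0 : Fin n → ℂ), conjVec u)).re|
        = |(LHSc - B cvec ((0 : Fin n → ℂ), conjVec u)).re| := by rw [Complex.sub_re]
      _ ≤ ‖LHSc - B cvec ((0 : Fin n → ℂ), conjVec u)‖ :=
          Complex.abs_re_le_norm _
      _ ≤ ε * Q u := hkey
  obtain ⟨hlow, hhigh⟩ := hcQ u
  have habs' := abs_le.1 habs
  have hD_low : δ * Q u ≤ diastasis ψ x y := by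
    have h1 : δ * Q u ≤ (c₁ / 2) * Q u :=
      mul_le_mul_of_nonneg_right hδ1 hQu0
    have h2 : ε * Q u = (c₁ / 2) * Q u := by rw [hε_def]
    nlinarith [habs'.1]
  have hD_high : diastasis ψ x y ≤ δ⁻¹ * Q u := by
    have h1 : (c₂ + c₁ / 2) * Q u ≤ δ⁻¹ * Q u :=
      mul_le_mul_of_nonneg_right hδinv hQu0
    nlinarith [habs'.2]
  refine ⟨by rw [← hQu]; exact hD_low, by rw [← hQu]; exact hD_high, ?_⟩
  have : diastasis ψ x y = potential ψ x + potential ψ y - 2 * (ψ x (conjVec y)).re := rfl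
  rw [← hQu]
  linarith [hD_low]
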